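/- Let p be a prime dividing n+1 and let 0 ≤ i, j ≤ v_p(n+1) and a, b ≥ 0 be integers. Then p^a·L(p^i) and p^b·L(p^j) are isomorphic as ℤG-lattices if and only if i = j. -/

import Mathlib

open Pointwise

/-- The matrix by which the adjacent transposition `(k k+1)` acts:
`E^{k,k-1} + 2 E^{k,k} + E^{k,k+1} - I_n` (indices `1,…,n` in the paper,
here shifted to `0,…,n-1`; out-of-range `E^{i,j}` are `0`). -/
def craigA (n : ℕ) (k : Fin n) : Matrix (Fin n) (Fin n) ℚ :=
  Matrix.of fun i j =>
    (if (i : ℕ) = (k : ℕ) ∧ (j : ℕ) + 1 = (k : ℕ) then 1 else 0)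
    + (if (i : ℕ) = (k : ℕ) ∧ (j : ℕ) = (k : ℕ) then 2 else 0)
    + (if (i : ℕ) = (k : ℕ) ∧ (j : ℕ) = (k : ℕ) + 1 then 1 else 0)
    - (if i = j then 1 else 0)

/-- `v = e_n + Σ_{i=1}^{n-1} (-1)^{n+1-i} i e_i` (with `e_i` the standard basis,
shifted to `0`-based indexing). -/
def craigV (n : ℕ) : Fin n → ℚ :=
  fun j => if (j : ℕ) = n - 1 then 1 else (-1 : ℚ) ^ (n - (j : ℕ)) * ((j : ℕ) + 1)

/-- `L(d) = (⊕_{i=1}^{n-1} ℤ·d·e_i) ⊕ ℤ·v` as a `ℤ`-submodule of `ℚ^n`. -/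
def craigL (n : ℕ) (d : ℕ) : Submodule ℤ (Fin n → ℚ) :=
  Submodule.span ℤ
    (insert (craigV n) {x | ∃ j : Fin n, (j : ℕ) < n - 1 ∧ x = (d : ℚ) • (Pi.single j 1 : Fin n → ℚ)})

/-- A `ℤ`-submodule is invariant under the action `ρ` of `𝔖_{n+1}`. -/
def Invar {n : ℕ} (ρ : Equiv.Perm (Fin (n + 1)) →* Matrix (Fin n) (Fin n) ℚ)
    (N : Submodule ℤ (Fin n → ℚ)) : Prop :=
  ∀ g : Equiv.Perm (Fin (n + 1)), ∀ x ∈ N, (ρ g).mulVec x ∈ N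

/-- `N` is a `ℤG`-sublattice of `M`. -/
def IsSubl {n : ℕ} (ρ : Equiv.Perm (Fin (n + 1)) →* Matrix (Fin n) (Fin n) ℚ)
    (M N : Submodule ℤ (Fin n → ℚ)) : Prop :=
  N ≤ M ∧ Invar ρ N

/-- The index `|M : N|` of `N` in `M` as additive subgroups (`0` if infinite). -/
noncomputable def subIndex {n : ℕ} (N M : Submodule ℤ (Fin n → ℚ)) : ℕ :=
  AddSubgroup.relIndex N.toAddSubgroup M.toAddSubgroup

/-- Isomorphism of `ℤG`-lattices: a `ℤ`-linear isomorphism commuting with the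
action of every `ρ g`. -/
def IsZGIso {n : ℕ} (ρ : Equiv.Perm (Fin (n + 1)) →* Matrix (Fin n) (Fin n) ℚ)
    (N N' : Submodule ℤ (Fin n → ℚ)) : Prop :=
  ∃ e : N ≃ₗ[ℤ] N',
    ∀ (g : Equiv.Perm (Fin (n + 1))) (x : N)
      (hx : (ρ g).mulVec (x : Fin n → ℚ) ∈ N),
      ((e ⟨(ρ g).mulVec (x : Fin n → ℚ), hx⟩ : N') : Fin n → ℚ)
        = (ρ g).mulVec ((e x : N') : Fin n → ℚ)

/-- `N` is a `p`-maximal sublattice of `M`: a maximal element of the set of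
proper `ℤG`-sublattices of `M` containing `p·M`. -/
def IsPMaximal {n : ℕ} (ρ : Equiv.Perm (Fin (n + 1)) →* Matrix (Fin n) (Fin n) ℚ)
    (p : ℕ) (M N : Submodule ℤ (Fin n → ℚ)) : Prop :=
  (IsSubl ρ M N ∧ N ≠ M ∧ (p : ℚ) • M ≤ N) ∧
    ∀ N' : Submodule ℤ (Fin n → ℚ),
      IsSubl ρ M N' → N' ≠ M → (p : ℚ) • M ≤ N' → N ≤ N' → N' = N

/-- `rad_p(M)`: the intersection of all `p`-maximal sublattices of `M`. -/
def radP {n : ℕ} (ρ : Equiv.Perm (Fin (n + 1)) →* Matrix (Fin n) (Fin n) ℚ)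
    (p : ℕ) (M : Submodule ℤ (Fin n → ℚ)) : Submodule ℤ (Fin n → ℚ) :=
  sInf {N | IsPMaximal ρ p M N}

/-- `Φ_p(M)`: the `ℤG`-sublattices `L` of `M` with `rad_p(M) ⊆ L ⊆ M`. -/
def PhiP {n : ℕ} (ρ : Equiv.Perm (Fin (n + 1)) →* Matrix (Fin n) (Fin n) ℚ)
    (p : ℕ) (M : Submodule ℤ (Fin n → ℚ)) : Set (Submodule ℤ (Fin n → ℚ)) :=
  {L | IsSubl ρ M L ∧ radP ρ p M ≤ L}

/-- `μ_p(M, L) = Σ_J (-1)^{|J|}` over subsets `J` of `max_p(M)` with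
`∩_{N ∈ J} N = L` (the empty intersection being `M`). -/
noncomputable def muP {n : ℕ}
    (ρ : Equiv.Perm (Fin (n + 1)) →* Matrix (Fin n) (Fin n) ℚ)
    (p : ℕ) (M L : Submodule ℤ (Fin n → ℚ)) : ℤ :=
  ∑ᶠ J ∈ {J : Finset (Submodule ℤ (Fin n → ℚ)) |
      (∀ N ∈ J, IsPMaximal ρ p M N) ∧ M ⊓ J.inf id = L},
    (-1 : ℤ) ^ J.card


open Matrix

/-- coefficient of the rank-one part of `craigA`. -/
def coefB (n : ℕ) (k j : Fin n) : ℚ :=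
  (if (j : ℕ) + 1 = (k : ℕ) then 1 else 0) + (if (j : ℕ) = (k : ℕ) then 2 else 0)
    + (if (j : ℕ) = (k : ℕ) + 1 then 1 else 0)

lemma craigA_apply (n : ℕ) (k i j : Fin n) :
    craigA n k i j = (if (i : ℕ) = (k : ℕ) then coefB n k j else 0) - (if i = j then 1 else 0) := by
  by_cases h : (i : ℕ) = (k : ℕ) <;> simp [craigA, coefB, h]

lemma craigA_mulVec (n : ℕ) (k : Fin n) (x : Fin n → ℚ) :
    craigA n k *ᵥ x = (∑ j, coefB n k j * x j) • (Pi.single k 1 : Fin n → ℚ) - x := by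
  funext i
  have hk : ∀ j, craigA n k i j * x j
      = (if (i : ℕ) = (k : ℕ) then coefB n k j * x j else 0) - (if i = j then 1 else 0) * x j := by
    intro j
    rw [craigA_apply, sub_mul]
    by_cases h : (i : ℕ) = (k : ℕ) <;> simp [h]
  simp only [Matrix.mulVec, dotProduct, hk, Finset.sum_sub_distrib]
  simp only [ite_mul, one_mul, zero_mul, Finset.sum_ite_eq, Finset.mem_univ, if_true,
    Pi.sub_apply, Pi.smul_apply, Pi.single_apply, smul_eq_mul, mul_ite, mul_one, mul_zero]
  congr 1
  by_cases h : (i : ℕ) = (k : ℕ)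
  · have : i = k := Fin.ext h
    simp [this]
  · have : ¬ i = k := fun hh => h (congrArg Fin.val hh)
    simp [h, this]

lemma sum_fin_eq {n : ℕ} (f : Fin n → ℚ) (m : ℕ) :
    ∑ j : Fin n, (if (j : ℕ) = m then f j else 0) = if h : m < n then f ⟨m, h⟩ else 0 := by
  split
  · next h =>
    rw [Finset.sum_eq_single (⟨m, h⟩ : Fin n)]
    · simp
    · intro b _ hb
      have : ¬ (b : ℕ) = m := fun hh => hb (Fin.ext hh)
      simp [this]
    · simp
  · next h =>
    apply Finset.sum_eq_zero
    intro j _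
    have : ¬ (j : ℕ) = m := fun hh => h (hh ▸ j.isLt)
    simp [this]

lemma sum_coef_mul {n : ℕ} (k : Fin n) (g : Fin n → ℚ) :
    ∑ j, coefB n k j * g j =
      (∑ j : Fin n, (if (j : ℕ) + 1 = (k : ℕ) then g j else 0))
      + 2 * (∑ j : Fin n, (if (j : ℕ) = (k : ℕ) then g j else 0))
      + (∑ j : Fin n, (if (j : ℕ) = (k : ℕ) + 1 then g j else 0)) := by
  simp only [coefB, add_mul, ite_mul, one_mul, zero_mul, Finset.sum_add_distrib, Finset.mul_sum,
    mul_ite, mul_zero]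

lemma sum_shift {n : ℕ} (k : Fin n) (g : Fin n → ℚ) :
    (∑ j : Fin n, (if (j : ℕ) + 1 = (k : ℕ) then g j else 0))
      = if h : (k : ℕ) - 1 < n ∧ 1 ≤ (k : ℕ) then g ⟨(k : ℕ) - 1, h.1⟩ else 0 := by
  by_cases hk : 1 ≤ (k : ℕ)
  · have : ∀ j : Fin n, ((j : ℕ) + 1 = (k : ℕ)) = ((j : ℕ) = (k : ℕ) - 1) := by
      intro j; simp only [eq_iff_iff]; omega
    simp only [this]
    rw [sum_fin_eq]
    have h1 : (k : ℕ) - 1 < n := by omega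
    simp [h1, hk]
  · have : ∀ j : Fin n, ¬ ((j : ℕ) + 1 = (k : ℕ)) := by intro j; omega
    simp [this, hk]

lemma craigV_eval_ne {n m : ℕ} (h : m < n) (hne : ¬ m = n - 1) :
    craigV n ⟨m, h⟩ = (-1 : ℚ) ^ (n - m) * (m + 1) := by simp [craigV, hne]

lemma craigV_eval_last {n m : ℕ} (h : m < n) (he : m = n - 1) :
    craigV n ⟨m, h⟩ = 1 := by simp [craigV, he]

lemma sum_coef_v {n : ℕ} (hn : 2 ≤ n) (k : Fin n) :
    ∑ j, coefB n k j * craigV n j = if n - 2 ≤ (k : ℕ) then (n : ℚ) + 1 else 0 := by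
  have hkn := k.isLt
  rw [sum_coef_mul, sum_shift, sum_fin_eq, sum_fin_eq]
  by_cases h1 : (k : ℕ) = n - 1
  · have c1 : ((k : ℕ) - 1 < n ∧ 1 ≤ (k : ℕ)) := by omega
    rw [dif_pos c1, dif_pos k.isLt, dif_neg (by omega : ¬ ((k : ℕ) + 1 < n)),
      if_pos (by omega : n - 2 ≤ (k : ℕ))]
    rw [craigV_eval_ne c1.1 (by omega), craigV_eval_last k.isLt h1]
    rw [show n - ((k : ℕ) - 1) = 2 by omega, show ((k : ℕ) - 1 : ℕ) = n - 2 by omega]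
    rw [Nat.cast_sub (by omega : 2 ≤ n)]
    push_cast
    ring
  · by_cases h2 : (k : ℕ) = n - 2
    · have cB := k.isLt
      have cC : (k : ℕ) + 1 < n := by omega
      rw [dif_pos k.isLt, dif_pos cC, if_pos (by omega : n - 2 ≤ (k : ℕ))]
      rw [craigV_eval_ne k.isLt h1, craigV_eval_last cC (by omega)]
      rw [show n - (k : ℕ) = 2 by omega, show ((k : ℕ) : ℚ) = (n : ℚ) - 2 by
        rw [show (k : ℕ) = n - 2 from h2, Nat.cast_sub (by omega : 2 ≤ n)]; push_cast; ring]
      by_cases hk0 : 1 ≤ (k : ℕ)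
      · rw [dif_pos ⟨by omega, hk0⟩, craigV_eval_ne (by omega) (by omega)]
        rw [show n - ((k : ℕ) - 1) = 3 by omega, show (((k : ℕ) - 1 : ℕ) : ℚ) = (n : ℚ) - 3 by
          rw [show ((k : ℕ) - 1 : ℕ) = n - 3 by omega, Nat.cast_sub (by omega : 3 ≤ n)]
          push_cast; ring]
        ring
      · have hn2 : n = 2 := by omega
        rw [dif_neg (by omega : ¬ ((k : ℕ) - 1 < n ∧ 1 ≤ (k : ℕ)))]
        subst hn2
        norm_num
    · -- k < n - 2, sum is 0
      have cB := k.isLt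
      have cC : (k : ℕ) + 1 < n := by omega
      rw [dif_pos k.isLt, dif_pos cC, if_neg (by omega : ¬ (n - 2 ≤ (k : ℕ)))]
      rw [craigV_eval_ne k.isLt h1, craigV_eval_ne cC (by omega)]
      by_cases hk0 : 1 ≤ (k : ℕ)
      · rw [dif_pos ⟨by omega, hk0⟩, craigV_eval_ne (by omega) (by omega)]
        set a := n - ((k : ℕ) + 1) with ha
        rw [show n - ((k : ℕ) - 1) = a + 2 by omega, show n - (k : ℕ) = a + 1 by omega,
          show (((k : ℕ) - 1 : ℕ) : ℚ) = ((k : ℕ) : ℚ) - 1 by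
            rw [Nat.cast_sub (by omega : 1 ≤ (k : ℕ))]; push_cast; ring]
        push_cast
        rw [pow_succ, pow_succ]
        ring
      · rw [dif_neg (by omega : ¬ ((k : ℕ) - 1 < n ∧ 1 ≤ (k : ℕ)))]
        have hk0' : (k : ℕ) = 0 := by omega
        rw [hk0']
        rw [show n - 0 = (n - 1) + 1 by omega, show n - (0 + 1) = n - 1 by omega]
        push_cast
        rw [pow_succ]
        ring

lemma craigV_mem (n d : ℕ) : craigV n ∈ craigL n d :=
  Submodule.subset_span (Set.mem_insert _ _)

lemma dsingle_mem (n d : ℕ) (t : Fin n) (ht : (t : ℕ) < n - 1) :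
    (d : ℚ) • (Pi.single t 1 : Fin n → ℚ) ∈ craigL n d :=
  Submodule.subset_span (Set.mem_insert_iff.mpr (Or.inr ⟨t, ht, rfl⟩))

lemma zsmul_mem' {n : ℕ} {N : Submodule ℤ (Fin n → ℚ)} (m : ℤ) {x : Fin n → ℚ} (hx : x ∈ N) :
    (m : ℚ) • x ∈ N := by
  rw [Int.cast_smul_eq_zsmul]
  exact N.smul_mem m hx

lemma craigV_int (n : ℕ) (t : Fin n) : ∃ c : ℤ, craigV n t = (c : ℚ) := by
  unfold craigV
  split
  · exact ⟨1, by norm_num⟩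
  · exact ⟨(-1) ^ (n - (t : ℕ)) * ((t : ℕ) + 1), by push_cast; ring⟩

/-- any multiple of `d` times a standard basis vector lies in `L(d)`. -/
lemma dz_smul_single_mem (n d : ℕ) (hn : 1 ≤ n) (m : ℤ) (k : Fin n) :
    ((d : ℚ) * (m : ℚ)) • (Pi.single k 1 : Fin n → ℚ) ∈ craigL n d := by
  by_cases hk : (k : ℕ) < n - 1
  · have : ((d : ℚ) * (m : ℚ)) • (Pi.single k 1 : Fin n → ℚ)
        = (m : ℚ) • ((d : ℚ) • (Pi.single k 1 : Fin n → ℚ)) := by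
      rw [smul_smul]; ring_nf
    rw [this]
    exact zsmul_mem' m (dsingle_mem n d k hk)
  · -- k is the last index
    have hk' : (k : ℕ) = n - 1 := by have := k.isLt; omega
    have hsingle : (Pi.single k 1 : Fin n → ℚ)
        = craigV n - ∑ t ∈ Finset.univ.erase k, craigV n t • (Pi.single t 1 : Fin n → ℚ) := by
      have hv : craigV n = ∑ t : Fin n, craigV n t • (Pi.single t 1 : Fin n → ℚ) := by
        funext i
        rw [Finset.sum_apply]
        simp [Pi.single_apply]
      have hvk : craigV n k = 1 := by simp [craigV, hk']
      rw [eq_sub_iff_add_eq]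
      conv_rhs => rw [hv]
      rw [← Finset.add_sum_erase Finset.univ
        (fun t => craigV n t • (Pi.single t 1 : Fin n → ℚ)) (Finset.mem_univ k), hvk, one_smul]
    rw [hsingle, smul_sub]
    apply Submodule.sub_mem
    · have : ((d : ℚ) * (m : ℚ)) = (((d : ℤ) * m : ℤ) : ℚ) := by push_cast; ring
      rw [this]
      exact zsmul_mem' _ (craigV_mem n d)
    · rw [Finset.smul_sum]
      apply Submodule.sum_mem
      intro t ht
      obtain ⟨c, hc⟩ := craigV_int n t
      have htk : (t : ℕ) < n - 1 := by
        have h1 := (Finset.mem_erase.mp ht).1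
        have h2 := t.isLt
        have : ¬ (t : ℕ) = n - 1 := fun hh => h1 (Fin.ext (hh.trans hk'.symm))
        omega
      have : ((d : ℚ) * (m : ℚ)) • craigV n t • (Pi.single t 1 : Fin n → ℚ)
          = ((m * c : ℤ) : ℚ) • ((d : ℚ) • (Pi.single t 1 : Fin n → ℚ)) := by
        rw [hc, smul_smul, smul_smul]; push_cast; ring_nf
      rw [this]
      exact zsmul_mem' _ (dsingle_mem n d t htk)

lemma coefB_int (n : ℕ) (k t : Fin n) : ∃ m : ℤ, coefB n k t = (m : ℚ) := by
  refine ⟨(if (t : ℕ) + 1 = (k : ℕ) then 1 else 0) + (if (t : ℕ) = (k : ℕ) then 2 else 0)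
    + (if (t : ℕ) = (k : ℕ) + 1 then 1 else 0), ?_⟩
  unfold coefB
  split_ifs <;> norm_num

lemma sum_coef_single (n : ℕ) (k t : Fin n) :
    ∑ j, coefB n k j * (Pi.single t 1 : Fin n → ℚ) j = coefB n k t := by
  rw [Finset.sum_eq_single t]
  · simp
  · intro b _ hb
    simp [Pi.single_apply, hb]
  · simp

lemma craigA_smul_mem {n d : ℕ} (hn : 2 ≤ n) (hd : d ∣ n + 1) (k : Fin n) :
    ∀ x ∈ craigL n d, craigA n k *ᵥ x ∈ craigL n d := by
  intro x hx
  induction hx using Submodule.span_induction with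
  | mem y hy =>
    rcases Set.mem_insert_iff.mp hy with h | ⟨t, ht, rfl⟩
    · -- y = craigV n
      subst h
      rw [craigA_mulVec, sum_coef_v hn k]
      apply Submodule.sub_mem _ _ (craigV_mem n d)
      split
      · obtain ⟨c, hc⟩ := hd
        have : ((n : ℚ) + 1) = (d : ℚ) * (c : ℚ) := by
          have : ((n + 1 : ℕ) : ℚ) = ((d * c : ℕ) : ℚ) := by rw [hc]
          push_cast at this
          linarith
        rw [this]
        exact dz_smul_single_mem n d (by omega) c k
      · rw [zero_smul]
        exact Submodule.zero_mem _
    · -- y = d • single t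
      have h1 : craigA n k *ᵥ ((d : ℚ) • (Pi.single t 1 : Fin n → ℚ))
          = (d : ℚ) • (craigA n k *ᵥ (Pi.single t 1 : Fin n → ℚ)) := by
        rw [Matrix.mulVec_smul]
      rw [h1, craigA_mulVec, sum_coef_single, smul_sub]
      apply Submodule.sub_mem
      · obtain ⟨m, hm⟩ := coefB_int n k t
        rw [hm, smul_smul]
        exact dz_smul_single_mem n d (by omega) m k
      · exact dsingle_mem n d t ht
  | zero => rw [Matrix.mulVec_zero]; exact Submodule.zero_mem _
  | add y z _ _ hy hz =>
    rw [Matrix.mulVec_add]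
    exact Submodule.add_mem _ hy hz
  | smul a y _ hy =>
    have : craigA n k *ᵥ (a • y) = a • (craigA n k *ᵥ y) := by
      rw [← Int.cast_smul_eq_zsmul ℚ, Matrix.mulVec_smul, Int.cast_smul_eq_zsmul]
    rw [this]
    exact Submodule.smul_mem _ a hy

lemma invar_craigL {n d : ℕ} (hn : 2 ≤ n)
    (ρ : Equiv.Perm (Fin (n + 1)) →* Matrix (Fin n) (Fin n) ℚ)
    (hρ : ∀ k : Fin n, ρ (Equiv.swap k.castSucc k.succ) = craigA n k)
    (hd : d ∣ n + 1) :
    ∀ g : Equiv.Perm (Fin (n + 1)), ∀ x ∈ craigL n d, (ρ g) *ᵥ x ∈ craigL n d := by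
  intro g
  have hg : g ∈ Submonoid.closure
      (Set.range fun i : Fin n => Equiv.swap i.castSucc i.succ) := by
    rw [Equiv.Perm.mclosure_swap_castSucc_succ]
    trivial
  induction hg using Submonoid.closure_induction with
  | mem y hy =>
    obtain ⟨k, rfl⟩ := hy
    intro x hx
    rw [hρ k]
    exact craigA_smul_mem hn hd k x hx
  | one =>
    intro x hx
    rw [_root_.map_one ρ, Matrix.one_mulVec]
    exact hx
  | mul y z _ _ hy hz =>
    intro x hx
    rw [_root_.map_mul ρ, ← Matrix.mulVec_mulVec]
    exact hy _ (hz x hx)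

lemma craigL_struct {n d : ℕ} (hn : 2 ≤ n) {x : Fin n → ℚ} (hx : x ∈ craigL n d) :
    ∃ m : ℤ, x ⟨n - 1, by omega⟩ = (m : ℚ) ∧
      ∃ c : ℤ, x ⟨0, by omega⟩ = (d : ℚ) * c + (m : ℚ) * craigV n ⟨0, by omega⟩ := by
  induction hx using Submodule.span_induction with
  | mem y hy =>
    rcases Set.mem_insert_iff.mp hy with h | ⟨t, ht, rfl⟩
    · subst h
      refine ⟨1, ?_, 0, ?_⟩
      · rw [craigV_eval_last (by omega) rfl]; norm_num
      · push_cast; ring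
    · refine ⟨0, ?_, if (t : ℕ) = 0 then 1 else 0, ?_⟩
      · have : ¬ ((⟨n - 1, by omega⟩ : Fin n) = t) := by
          intro h
          have := congrArg Fin.val h
          simp at this
          omega
        simp [Pi.single_apply, this]
      · by_cases h0 : (t : ℕ) = 0
        · have : (⟨0, by omega⟩ : Fin n) = t := Fin.ext (by simp [h0])
          simp [Pi.single_apply, this, h0]
        · have : ¬ ((⟨0, by omega⟩ : Fin n) = t) := by
            intro h
            exact h0 (congrArg Fin.val h).symm
          simp [Pi.single_apply, this, h0]
  | zero => exact ⟨0, by simp, 0, by simp⟩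
  | add y z _ _ hy hz =>
    obtain ⟨m1, h1, c1, h1'⟩ := hy
    obtain ⟨m2, h2, c2, h2'⟩ := hz
    refine ⟨m1 + m2, ?_, c1 + c2, ?_⟩
    · simp only [Pi.add_apply, h1, h2]; push_cast; ring
    · simp only [Pi.add_apply, h1', h2']; push_cast; ring
  | smul a y _ hy =>
    obtain ⟨m1, h1, c1, h1'⟩ := hy
    refine ⟨a * m1, ?_, a * c1, ?_⟩
    · simp only [Pi.smul_apply, h1, smul_eq_mul, zsmul_eq_mul]; push_cast; ring
    · simp only [Pi.smul_apply, h1', smul_eq_mul, zsmul_eq_mul]; push_cast; ring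

/-- rank-one part of craigA: `craigA n k + 1`. -/
lemma craigB_apply (n : ℕ) (k i j : Fin n) :
    (craigA n k + 1) i j = if (i : ℕ) = (k : ℕ) then coefB n k j else 0 := by
  rw [Matrix.add_apply, craigA_apply, Matrix.one_apply]
  ring

lemma coefB_self (n : ℕ) (k : Fin n) : coefB n k k = 2 := by
  simp [coefB]

lemma coefB_succ {n : ℕ} (k : Fin n) (h : (k : ℕ) + 1 < n) :
    coefB n k ⟨(k : ℕ) + 1, h⟩ = 1 := by
  simp [coefB]
  omega

lemma commutant_scalar {n : ℕ} (hn : 2 ≤ n) (M : Matrix (Fin n) (Fin n) ℚ)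
    (h : ∀ k, M * craigA n k = craigA n k * M) :
    ∃ c : ℚ, M = c • (1 : Matrix (Fin n) (Fin n) ℚ) := by
  have hB : ∀ k, M * (craigA n k + 1) = (craigA n k + 1) * M := by
    intro k
    rw [Matrix.mul_add, Matrix.add_mul, Matrix.mul_one, Matrix.one_mul, h k]
  -- off-diagonal entries vanish
  have hoff : ∀ (k i : Fin n), i ≠ k → M i k = 0 := by
    intro k i hik
    have := congrFun (congrFun (hB k) i) k
    rw [Matrix.mul_apply, Matrix.mul_apply] at this
    have hL : ∑ l, M i l * (craigA n k + 1) l k = 2 * M i k := by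
      have hBk : ∀ l : Fin n, (craigA n k + 1) l k = if l = k then 2 else 0 := by
        intro l
        rw [craigB_apply]
        by_cases hl : l = k
        · simp [hl, coefB_self]
        · have : ¬ ((l : ℕ) = (k : ℕ)) := fun hh => hl (Fin.ext hh)
          simp [this, hl]
      simp only [hBk, mul_ite, mul_zero]
      rw [Finset.sum_ite_eq' Finset.univ k]
      simp [mul_comm]
    have hR : ∑ l, (craigA n k + 1) i l * M l k = 0 := by
      apply Finset.sum_eq_zero
      intro l _
      rw [craigB_apply]
      have : ¬ ((i : ℕ) = (k : ℕ)) := fun hh => hik (Fin.ext hh)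
      simp [this]
    rw [hL, hR] at this
    linarith
  -- adjacent diagonal entries are equal
  have hdiag : ∀ (k : Fin n) (hk : (k : ℕ) + 1 < n),
      M k k = M ⟨(k : ℕ) + 1, hk⟩ ⟨(k : ℕ) + 1, hk⟩ := by
    intro k hk
    set k' : Fin n := ⟨(k : ℕ) + 1, hk⟩ with hk'
    have := congrFun (congrFun (hB k) k) k'
    rw [Matrix.mul_apply, Matrix.mul_apply] at this
    have hL : ∑ l, M k l * (craigA n k + 1) l k' = M k k := by
      have hBk : ∀ l : Fin n, (craigA n k + 1) l k' = if l = k then 1 else 0 := by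
        intro l
        rw [craigB_apply]
        by_cases hl : l = k
        · simp [hl, coefB_succ k hk, hk']
        · have : ¬ ((l : ℕ) = (k : ℕ)) := fun hh => hl (Fin.ext hh)
          simp [this, hl]
      simp only [hBk, mul_ite, mul_zero, mul_one]
      rw [Finset.sum_ite_eq' Finset.univ k]
      simp
    have hR : ∑ l, (craigA n k + 1) k l * M l k' = M k' k' := by
      have hterm : ∀ l : Fin n, (craigA n k + 1) k l * M l k'
          = if l = k' then M k' k' else 0 := by
        intro l
        by_cases hl : l = k'
        · subst hl
          rw [craigB_apply, if_pos rfl, coefB_succ k hk]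
          simp
        · rw [if_neg hl, hoff k' l hl, mul_zero]
      simp only [hterm]
      rw [Finset.sum_ite_eq' Finset.univ k']
      simp
    rw [hL, hR] at this
    exact this
  -- all diagonal entries are equal to M 0 0
  have h0 : (0 : ℕ) < n := by omega
  have hdiag' : ∀ (m : ℕ) (hm : m < n), M ⟨m, hm⟩ ⟨m, hm⟩ = M ⟨0, h0⟩ ⟨0, h0⟩ := by
    intro m
    induction m with
    | zero => intro hm; rfl
    | succ t ih =>
      intro hm
      have ht : t < n := by omega
      have := hdiag ⟨t, ht⟩ (by simpa using hm)
      rw [← ih ht, this]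
  refine ⟨M ⟨0, h0⟩ ⟨0, h0⟩, ?_⟩
  ext i j
  by_cases hij : i = j
  · subst hij
    rw [Matrix.smul_apply, Matrix.one_apply_eq, smul_eq_mul, mul_one]
    have : i = (⟨(i : ℕ), i.isLt⟩ : Fin n) := Fin.ext rfl
    rw [this, hdiag' (i : ℕ) i.isLt]
  · rw [Matrix.smul_apply, Matrix.one_apply_ne hij, smul_eq_mul, mul_zero]
    exact hoff j i hij

def craigW (n d : ℕ) (s : ℚ) : Fin n → (Fin n → ℚ) :=
  fun t => if (t : ℕ) = n - 1 then s • craigV n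
    else s • ((d : ℚ) • (Pi.single t 1 : Fin n → ℚ))

lemma mem_smul_iff {n : ℕ} {α : ℚ} {S : Submodule ℤ (Fin n → ℚ)} {x : Fin n → ℚ} :
    x ∈ α • S ↔ ∃ y ∈ S, α • y = x := by
  rw [← SetLike.mem_coe, Submodule.coe_pointwise_smul]
  exact Set.mem_smul_set

lemma craigW_mem {n d : ℕ} (hn : 2 ≤ n) (s : ℚ) (t : Fin n) :
    craigW n d s t ∈ s • craigL n d := by
  unfold craigW
  split
  · exact Submodule.smul_mem_pointwise_smul _ _ _ (craigV_mem n d)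
  · next h =>
    have ht : (t : ℕ) < n - 1 := by have := t.isLt; omega
    exact Submodule.smul_mem_pointwise_smul _ _ _ (dsingle_mem n d t ht)

lemma craigW_span {n d : ℕ} (hn : 2 ≤ n) (s : ℚ) :
    Submodule.span ℤ (Set.range (craigW n d s)) = s • craigL n d := by
  apply le_antisymm
  · rw [Submodule.span_le]
    rintro z ⟨t, rfl⟩
    exact craigW_mem hn s t
  · unfold craigL
    rw [Submodule.smul_span, Submodule.span_le]
    intro z hz
    obtain ⟨y, hy, rfl⟩ := Set.mem_smul_set.mp hz
    rw [SetLike.mem_coe]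
    apply Submodule.subset_span
    rcases Set.mem_insert_iff.mp hy with h | ⟨t, ht, rfl⟩
    · subst h
      refine ⟨⟨n - 1, by omega⟩, ?_⟩
      simp [craigW]
    · refine ⟨t, ?_⟩
      have : ¬ ((t : ℕ) = n - 1) := by omega
      simp [craigW, this]

lemma craigW_li {n d : ℕ} (hn : 2 ≤ n) {s : ℚ} (hs : s ≠ 0) (hd : d ≠ 0) :
    LinearIndependent ℚ (craigW n d s) := by
  have hidxL : ((⟨n - 1, by omega⟩ : Fin n) : ℕ) = n - 1 := rfl
  set idxL : Fin n := ⟨n - 1, by omega⟩ with hidx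
  rw [Fintype.linearIndependent_iff]
  intro g hg
  have hlast : g idxL = 0 := by
    have h1 := congrFun hg idxL
    rw [Finset.sum_apply] at h1
    have hterm : ∀ t : Fin n, (g t • craigW n d s t) idxL
        = if t = idxL then g idxL * s else 0 := by
      intro t
      by_cases ht : t = idxL
      · subst ht
        rw [if_pos rfl]
        have hv : craigV n idxL = 1 := by simp [craigV, hidxL]
        simp [craigW, hv, hidxL]
      · rw [if_neg ht]
        have ht' : ¬ ((t : ℕ) = n - 1) := fun hh => ht (Fin.ext hh)
        have hsingle : (Pi.single t 1 : Fin n → ℚ) idxL = 0 := by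
          rw [Pi.single_apply, if_neg (fun hh => ht (Fin.ext (congrArg Fin.val hh)).symm)]
        simp [craigW, ht', hsingle]
    rw [Finset.sum_congr rfl (fun t _ => hterm t), Finset.sum_ite_eq' Finset.univ idxL] at h1
    simp at h1
    rcases h1 with h1 | h1
    · exact h1
    · exact absurd h1 hs
  intro t
  by_cases ht : t = idxL
  · rw [ht]; exact hlast
  · have ht' : ¬ ((t : ℕ) = n - 1) := fun hh => ht (Fin.ext hh)
    have h1 := congrFun hg t
    rw [Finset.sum_apply] at h1
    have hterm : ∀ u : Fin n, (g u • craigW n d s u) t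
        = if u = t then g t * (s * d) else 0 := by
      intro u
      by_cases hu : u = t
      · subst hu
        rw [if_pos rfl]
        simp [craigW, ht']
        try ring
      · rw [if_neg hu]
        by_cases hul : u = idxL
        · subst hul
          simp [hlast]
        · have hul' : ¬ ((u : ℕ) = n - 1) := fun hh => hul (Fin.ext hh)
          have hsingle : (Pi.single u 1 : Fin n → ℚ) t = 0 := by
            rw [Pi.single_apply, if_neg (fun hh => hu (Fin.ext (congrArg Fin.val hh)).symm)]
          simp [craigW, hul', hsingle]
    rw [Finset.sum_congr rfl (fun u _ => hterm u), Finset.sum_ite_eq' Finset.univ t] at h1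
    simp at h1
    rcases h1 with h1 | h1 | h1
    · exact h1
    · exact absurd h1 hs
    · exact absurd (Nat.cast_injective (h1.trans (Nat.cast_zero).symm) : d = 0) hd

lemma zg_iso_smul_smul {n : ℕ} (ρ : Equiv.Perm (Fin (n + 1)) →* Matrix (Fin n) (Fin n) ℚ)
    (L : Submodule ℤ (Fin n → ℚ)) {s t : ℚ} (hs : s ≠ 0) (ht : t ≠ 0) :
    IsZGIso ρ (s • L) (t • L) := by
  have key : ∀ (u v : ℚ), u ≠ 0 → ∀ x ∈ u • L, (v / u) • x ∈ v • L := by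
    intro u v hu x hx
    obtain ⟨y, hy, rfl⟩ := mem_smul_iff.mp hx
    rw [smul_smul, div_mul_cancel₀ _ hu]
    exact Submodule.smul_mem_pointwise_smul _ _ _ hy
  refine ⟨{
    toFun := fun x => ⟨(t / s) • (x : Fin n → ℚ), key s t hs _ x.2⟩
    map_add' := by
      intro x y
      apply Subtype.ext
      simp [smul_add]
    map_smul' := by
      intro z x
      apply Subtype.ext
      simp [smul_comm]
    invFun := fun y => ⟨(s / t) • (y : Fin n → ℚ), key t s ht _ y.2⟩
    left_inv := by
      intro x
      apply Subtype.ext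
      simp only [smul_smul]
      rw [div_mul_div_comm, mul_comm, ← div_mul_div_comm, div_self hs, div_self ht]
      simp
    right_inv := by
      intro y
      apply Subtype.ext
      simp only [smul_smul]
      rw [div_mul_div_comm, mul_comm, ← div_mul_div_comm, div_self hs, div_self ht]
      simp }, ?_⟩
  intro g x hx
  simp only [LinearEquiv.coe_mk]
  exact (Matrix.mulVec_smul (ρ g) (t / s) (x : Fin n → ℚ)).symm

lemma hv_scalar {n : ℕ} (hn : 2 ≤ n) (dd : ℕ) (s : ℚ)
    (hs : s • craigV n ∈ craigL n dd) : ∃ m : ℤ, s = (m : ℚ) := by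
  obtain ⟨m, hm, _⟩ := craigL_struct hn hs
  refine ⟨m, ?_⟩
  have h1 : (s • craigV n) ⟨n - 1, by omega⟩ = s := by
    rw [Pi.smul_apply, craigV_eval_last (by omega) rfl, smul_eq_mul, mul_one]
  rw [← h1]; exact hm

lemma hs_scalar {n : ℕ} (hn : 2 ≤ n) (dd : ℕ) (s : ℚ)
    (hs : s • (Pi.single (⟨0, by omega⟩ : Fin n) 1 : Fin n → ℚ) ∈ craigL n dd) :
    ∃ m : ℤ, s = (dd : ℚ) * (m : ℚ) := by
  obtain ⟨m, hm, cc, hcc⟩ := craigL_struct hn hs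
  have hne : ¬ ((⟨n - 1, by omega⟩ : Fin n) = (⟨0, by omega⟩ : Fin n)) := by
    intro h
    have := congrArg Fin.val h
    simp at this
    omega
  have hL : (s • (Pi.single (⟨0, by omega⟩ : Fin n) 1 : Fin n → ℚ)) ⟨n - 1, by omega⟩ = 0 := by
    rw [Pi.smul_apply, Pi.single_apply, if_neg hne, smul_zero]
  have hm0 : m = 0 := by
    have : (m : ℚ) = 0 := by rw [← hm, hL]
    exact_mod_cast this
  have h0 : (s • (Pi.single (⟨0, by omega⟩ : Fin n) 1 : Fin n → ℚ)) ⟨0, by omega⟩ = s := by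
    rw [Pi.smul_apply, Pi.single_apply, if_pos rfl, smul_eq_mul, mul_one]
  refine ⟨cc, ?_⟩
  rw [← h0, hcc, hm0]
  push_cast
  ring


/-- `p^a·L(p^i)` and `p^b·L(p^j)` are isomorphic as
`ℤG`-lattices if and only if `i = j`. -/
theorem scaled_L_iso_iff (n : ℕ) (hn : 2 ≤ n)
    (ρ : Equiv.Perm (Fin (n + 1)) →* Matrix (Fin n) (Fin n) ℚ)
    (hρ : ∀ k : Fin n, ρ (Equiv.swap k.castSucc k.succ) = craigA n k)
    (p : ℕ) (hp : p.Prime) (hpd : p ∣ n + 1)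
    (i j : ℕ) (hi : i ≤ padicValNat p (n + 1)) (hj : j ≤ padicValNat p (n + 1))
    (a b : ℕ) :
    IsZGIso ρ (((p : ℚ) ^ a) • craigL n (p ^ i))
        (((p : ℚ) ^ b) • craigL n (p ^ j)) ↔ i = j := by
  have hp2 : 2 ≤ p := hp.two_le
  have hq0 : (p : ℚ) ≠ 0 := Nat.cast_ne_zero.mpr (by omega)
  have hqa : ((p : ℚ)) ^ a ≠ 0 := pow_ne_zero _ hq0
  have hqb : ((p : ℚ)) ^ b ≠ 0 := pow_ne_zero _ hq0
  constructor
  · intro h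
    -- notation
    have hn1 : (n + 1) ≠ 0 := by omega
    haveI : Fact p.Prime := ⟨hp⟩
    have hd₁ : p ^ i ∣ n + 1 := dvd_trans (pow_dvd_pow p hi) (pow_padicValNat_dvd)
    have hd₂ : p ^ j ∣ n + 1 := dvd_trans (pow_dvd_pow p hj) (pow_padicValNat_dvd)
    have hd₁0 : p ^ i ≠ 0 := pow_ne_zero _ (by omega)
    obtain ⟨e, he⟩ := h
    -- invariance of the source lattice
    have hNinv : ∀ g : Equiv.Perm (Fin (n + 1)), ∀ x ∈ ((p : ℚ) ^ a) • craigL n (p ^ i),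
        (ρ g) *ᵥ x ∈ ((p : ℚ) ^ a) • craigL n (p ^ i) := by
      intro g x hx
      obtain ⟨y, hy, rfl⟩ := mem_smul_iff.mp hx
      rw [Matrix.mulVec_smul]
      exact Submodule.smul_mem_pointwise_smul _ _ _ (invar_craigL hn ρ hρ hd₁ g y hy)
    -- basis family
    have hwN : ∀ t, craigW n (p ^ i) ((p : ℚ) ^ a) t ∈ ((p : ℚ) ^ a) • craigL n (p ^ i) :=
      craigW_mem hn _
    have li := craigW_li (d := p ^ i) hn hqa hd₁0
    haveI : Nonempty (Fin n) := ⟨⟨0, by omega⟩⟩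
    set B := basisOfLinearIndependentOfCardEqFinrank li
      (by simp [Module.finrank_fintype_fun_eq_card]) with hBdef
    have hB : ∀ t, B t = craigW n (p ^ i) ((p : ℚ) ^ a) t := fun t => by
      rw [hBdef, coe_basisOfLinearIndependentOfCardEqFinrank]
    set E := B.constr ℚ (fun t =>
      ((e ⟨craigW n (p ^ i) ((p : ℚ) ^ a) t, hwN t⟩ : ↥(((p : ℚ) ^ b) • craigL n (p ^ j)))
        : Fin n → ℚ)) with hEdef
    have hEw : ∀ t, E (craigW n (p ^ i) ((p : ℚ) ^ a) t)
        = ((e ⟨craigW n (p ^ i) ((p : ℚ) ^ a) t, hwN t⟩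
          : ↥(((p : ℚ) ^ b) • craigL n (p ^ j))) : Fin n → ℚ) := by
      intro t
      have h1 := B.constr_basis ℚ (fun t =>
        ((e ⟨craigW n (p ^ i) ((p : ℚ) ^ a) t, hwN t⟩
          : ↥(((p : ℚ) ^ b) • craigL n (p ^ j))) : Fin n → ℚ)) t
      rw [hB t] at h1
      exact h1
    have hspan := craigW_span (d := p ^ i) hn ((p : ℚ) ^ a)
    -- E agrees with e on the lattice
    have hEe0 : ∀ x, x ∈ Submodule.span ℤ (Set.range (craigW n (p ^ i) ((p : ℚ) ^ a))) →
        ∀ hx : x ∈ ((p : ℚ) ^ a) • craigL n (p ^ i),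
          E x = ((e ⟨x, hx⟩ : ↥(((p : ℚ) ^ b) • craigL n (p ^ j))) : Fin n → ℚ) := by
      intro x hxs
      induction hxs using Submodule.span_induction with
      | mem y hy =>
        obtain ⟨t, rfl⟩ := hy
        intro hx
        exact hEw t
      | zero =>
        intro hx
        have h0 : (⟨(0 : Fin n → ℚ), hx⟩ : ↥(((p : ℚ) ^ a) • craigL n (p ^ i))) = 0 :=
          Subtype.ext rfl
        rw [map_zero, h0, map_zero]
        rfl
      | add y z hy hz ihy ihz =>
        intro hx
        have hyN : y ∈ ((p : ℚ) ^ a) • craigL n (p ^ i) := hspan ▸ hy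
        have hzN : z ∈ ((p : ℚ) ^ a) • craigL n (p ^ i) := hspan ▸ hz
        have hsub : (⟨y + z, hx⟩ : ↥(((p : ℚ) ^ a) • craigL n (p ^ i)))
            = ⟨y, hyN⟩ + ⟨z, hzN⟩ := Subtype.ext rfl
        rw [map_add, ihy hyN, ihz hzN, hsub, map_add]
        rfl
      | smul m y hy ihy =>
        intro hx
        have hyN : y ∈ ((p : ℚ) ^ a) • craigL n (p ^ i) := hspan ▸ hy
        have hsub : (⟨m • y, hx⟩ : ↥(((p : ℚ) ^ a) • craigL n (p ^ i)))
            = m • ⟨y, hyN⟩ := Subtype.ext rfl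
        rw [map_zsmul, ihy hyN, hsub, _root_.map_smul]
        rfl
    have hEe : ∀ x (hx : x ∈ ((p : ℚ) ^ a) • craigL n (p ^ i)),
        E x = ((e ⟨x, hx⟩ : ↥(((p : ℚ) ^ b) • craigL n (p ^ j))) : Fin n → ℚ) :=
      fun x hx => hEe0 x (hspan.symm ▸ hx) hx
    -- E commutes with each craigA
    have hcomm : ∀ k : Fin n, E.comp (Matrix.toLin' (craigA n k))
        = (Matrix.toLin' (craigA n k)).comp E := by
      intro k
      apply B.ext
      intro t
      rw [hB t]
      simp only [LinearMap.comp_apply, Matrix.toLin'_apply]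
      have hg : ρ (Equiv.swap k.castSucc k.succ) = craigA n k := hρ k
      have hmem' : ρ (Equiv.swap k.castSucc k.succ) *ᵥ craigW n (p ^ i) ((p : ℚ) ^ a) t
          ∈ ((p : ℚ) ^ a) • craigL n (p ^ i) := hNinv _ _ (hwN t)
      have hmem : craigA n k *ᵥ craigW n (p ^ i) ((p : ℚ) ^ a) t
          ∈ ((p : ℚ) ^ a) • craigL n (p ^ i) := by rw [← hg]; exact hmem'
      rw [hEe _ hmem]
      have hsub : (⟨craigA n k *ᵥ craigW n (p ^ i) ((p : ℚ) ^ a) t, hmem⟩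
            : ↥(((p : ℚ) ^ a) • craigL n (p ^ i)))
          = ⟨ρ (Equiv.swap k.castSucc k.succ) *ᵥ craigW n (p ^ i) ((p : ℚ) ^ a) t, hmem'⟩ := by
        apply Subtype.ext
        show craigA n k *ᵥ craigW n (p ^ i) ((p : ℚ) ^ a) t
          = ρ (Equiv.swap k.castSucc k.succ) *ᵥ craigW n (p ^ i) ((p : ℚ) ^ a) t
        rw [hg]
      rw [hsub, he (Equiv.swap k.castSucc k.succ) ⟨_, hwN t⟩ hmem', hg, hEw t]
    -- E is scalar
    have hM : ∀ k, (LinearMap.toMatrix' E) * craigA n k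
        = craigA n k * (LinearMap.toMatrix' E) := by
      intro k
      have h1 := congrArg LinearMap.toMatrix' (hcomm k)
      rw [LinearMap.toMatrix'_comp, LinearMap.toMatrix'_comp, LinearMap.toMatrix'_toLin'] at h1
      exact h1
    obtain ⟨c, hc⟩ := commutant_scalar hn _ hM
    have hE : ∀ x : Fin n → ℚ, E x = c • x := by
      intro x
      conv_lhs => rw [← Matrix.toLin'_toMatrix' E]
      rw [hc, Matrix.toLin'_apply, Matrix.smul_mulVec, Matrix.one_mulVec]
    have key : ∀ x (hx : x ∈ ((p : ℚ) ^ a) • craigL n (p ^ i)),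
        ((e ⟨x, hx⟩ : ↥(((p : ℚ) ^ b) • craigL n (p ^ j))) : Fin n → ℚ) = c • x :=
      fun x hx => by rw [← hEe x hx, hE]
    have hmemN' : ∀ x (hx : x ∈ ((p : ℚ) ^ a) • craigL n (p ^ i)),
        c • x ∈ ((p : ℚ) ^ b) • craigL n (p ^ j) :=
      fun x hx => key x hx ▸ (e ⟨x, hx⟩).2
    have hsurj : ∀ z ∈ ((p : ℚ) ^ b) • craigL n (p ^ j),
        ∃ x ∈ ((p : ℚ) ^ a) • craigL n (p ^ i), c • x = z := by
      intro z hz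
      refine ⟨(e.symm ⟨z, hz⟩ : Fin n → ℚ), (e.symm ⟨z, hz⟩).2, ?_⟩
      have h2 := key _ (e.symm ⟨z, hz⟩).2
      have h3 : (⟨((e.symm ⟨z, hz⟩ : ↥(((p : ℚ) ^ a) • craigL n (p ^ i))) : Fin n → ℚ),
          (e.symm ⟨z, hz⟩).2⟩ : ↥(((p : ℚ) ^ a) • craigL n (p ^ i))) = e.symm ⟨z, hz⟩ :=
        Subtype.ext rfl
      rw [h3, e.apply_symm_apply] at h2
      exact h2.symm
    -- arithmetic
    have hvN' : (p : ℚ) ^ b • craigV n ∈ ((p : ℚ) ^ b) • craigL n (p ^ j) :=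
      Submodule.smul_mem_pointwise_smul _ _ _ (craigV_mem n (p ^ j))
    have hc0 : c ≠ 0 := by
      obtain ⟨x, hxN, hcx⟩ := hsurj _ hvN'
      intro h0
      rw [h0, zero_smul] at hcx
      have h1 := congrFun hcx ⟨n - 1, by omega⟩
      rw [Pi.zero_apply] at h1
      rw [Pi.smul_apply, craigV_eval_last (by omega) rfl, smul_eq_mul, mul_one] at h1
      exact hqb h1.symm
    have hca : c * (p : ℚ) ^ a ≠ 0 := mul_ne_zero hc0 hqa
    -- v gives the unit
    have hvmem : (p : ℚ) ^ a • craigV n ∈ ((p : ℚ) ^ a) • craigL n (p ^ i) :=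
      Submodule.smul_mem_pointwise_smul _ _ _ (craigV_mem n (p ^ i))
    obtain ⟨u, hu, huv⟩ := mem_smul_iff.mp (hmemN' _ hvmem)
    have hu_eq : u = ((c * (p : ℚ) ^ a) / (p : ℚ) ^ b) • craigV n := by
      have h1 := congrArg (fun z => ((p : ℚ) ^ b)⁻¹ • z) huv
      simp only [smul_smul] at h1
      rw [inv_mul_cancel₀ hqb, one_smul] at h1
      rw [h1, div_eq_inv_mul]
    obtain ⟨m, hm⟩ := hv_scalar hn (p ^ j) _ (hu_eq ▸ hu)
    obtain ⟨x, hxN, hcx⟩ := hsurj _ hvN'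
    obtain ⟨y, hyL, hya⟩ := mem_smul_iff.mp hxN
    have hy_eq : y = ((p : ℚ) ^ b / (c * (p : ℚ) ^ a)) • craigV n := by
      have h1 : (c * (p : ℚ) ^ a) • y = (p : ℚ) ^ b • craigV n := by
        rw [← hcx, ← hya, smul_smul]
      have h2 := congrArg (fun z => (c * (p : ℚ) ^ a)⁻¹ • z) h1
      simp only [smul_smul] at h2
      rw [inv_mul_cancel₀ hca, one_smul] at h2
      rw [h2, div_eq_inv_mul]
    obtain ⟨m', hm'⟩ := hv_scalar hn (p ^ i) _ (hy_eq ▸ hyL)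
    have hmm' : (m : ℚ) * (m' : ℚ) = 1 := by
      rw [← hm, ← hm']
      field_simp
    -- single-basis-vector computations
    have h0lt : ((⟨0, by omega⟩ : Fin n) : ℕ) < n - 1 := by
      show (0 : ℕ) < n - 1
      omega
    have hs1 : (p : ℚ) ^ a • (((p ^ i : ℕ) : ℚ) •
          (Pi.single (⟨0, by omega⟩ : Fin n) 1 : Fin n → ℚ))
        ∈ ((p : ℚ) ^ a) • craigL n (p ^ i) :=
      Submodule.smul_mem_pointwise_smul _ _ _ (dsingle_mem n (p ^ i) _ h0lt)
    obtain ⟨u₂, hu₂, hq₂⟩ := mem_smul_iff.mp (hmemN' _ hs1)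
    have hu₂eq : u₂ = ((c * (p : ℚ) ^ a * ((p ^ i : ℕ) : ℚ)) / (p : ℚ) ^ b) •
        (Pi.single (⟨0, by omega⟩ : Fin n) 1 : Fin n → ℚ) := by
      have h1 := congrArg (fun z => ((p : ℚ) ^ b)⁻¹ • z) hq₂
      simp only [smul_smul] at h1
      rw [inv_mul_cancel₀ hqb, one_smul] at h1
      rw [h1, div_eq_inv_mul]
      congr 1
      ring
    obtain ⟨c₂, hc₂⟩ := hs_scalar hn (p ^ j) _ (hu₂eq ▸ hu₂)
    have hz3 : (p : ℚ) ^ b • (((p ^ j : ℕ) : ℚ) •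
          (Pi.single (⟨0, by omega⟩ : Fin n) 1 : Fin n → ℚ))
        ∈ ((p : ℚ) ^ b) • craigL n (p ^ j) :=
      Submodule.smul_mem_pointwise_smul _ _ _ (dsingle_mem n (p ^ j) _ h0lt)
    obtain ⟨x₃, hx₃N, hcx₃⟩ := hsurj _ hz3
    obtain ⟨y₃, hy₃L, hy₃a⟩ := mem_smul_iff.mp hx₃N
    have hy₃eq : y₃ = (((p : ℚ) ^ b * ((p ^ j : ℕ) : ℚ)) / (c * (p : ℚ) ^ a)) •
        (Pi.single (⟨0, by omega⟩ : Fin n) 1 : Fin n → ℚ) := by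
      have h1 : (c * (p : ℚ) ^ a) • y₃ = ((p : ℚ) ^ b * ((p ^ j : ℕ) : ℚ)) •
          (Pi.single (⟨0, by omega⟩ : Fin n) 1 : Fin n → ℚ) := by
        rw [← hy₃a, smul_smul, smul_smul] at hcx₃
        exact hcx₃
      have h2 := congrArg (fun z => (c * (p : ℚ) ^ a)⁻¹ • z) h1
      simp only [smul_smul] at h2
      rw [inv_mul_cancel₀ hca, one_smul] at h2
      rw [h2, div_eq_inv_mul]
    obtain ⟨c₃, hc₃⟩ := hs_scalar hn (p ^ i) _ (hy₃eq ▸ hy₃L)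
    -- final arithmetic
    have hD₁pos : (0 : ℚ) < ((p ^ i : ℕ) : ℚ) := by
      exact_mod_cast pow_pos (show 0 < p by omega) i
    have hD₂pos : (0 : ℚ) < ((p ^ j : ℕ) : ℚ) := by
      exact_mod_cast pow_pos (show 0 < p by omega) j
    have e2 : (m : ℚ) * ((p ^ i : ℕ) : ℚ) = ((p ^ j : ℕ) : ℚ) * (c₂ : ℚ) := by
      rw [← hm, ← hc₂, div_mul_eq_mul_div]
    have e3 : (m' : ℚ) * ((p ^ j : ℕ) : ℚ) = ((p ^ i : ℕ) : ℚ) * (c₃ : ℚ) := by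
      rw [← hm', ← hc₃, div_mul_eq_mul_div]
    have hcc : (c₂ : ℚ) * (c₃ : ℚ) = 1 := by
      have h5 : ((p ^ i : ℕ) : ℚ) * ((p ^ j : ℕ) : ℚ) * ((c₂ : ℚ) * (c₃ : ℚ))
          = ((p ^ i : ℕ) : ℚ) * ((p ^ j : ℕ) : ℚ) * 1 := by
        calc ((p ^ i : ℕ) : ℚ) * ((p ^ j : ℕ) : ℚ) * ((c₂ : ℚ) * (c₃ : ℚ))
            = (((p ^ j : ℕ) : ℚ) * (c₂ : ℚ)) * (((p ^ i : ℕ) : ℚ) * (c₃ : ℚ)) := by ring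
          _ = ((m : ℚ) * ((p ^ i : ℕ) : ℚ)) * ((m' : ℚ) * ((p ^ j : ℕ) : ℚ)) := by
              rw [← e2, ← e3]
          _ = ((p ^ i : ℕ) : ℚ) * ((p ^ j : ℕ) : ℚ) * ((m : ℚ) * (m' : ℚ)) := by ring
          _ = ((p ^ i : ℕ) : ℚ) * ((p ^ j : ℕ) : ℚ) * 1 := by rw [hmm']
      exact mul_left_cancel₀ (ne_of_gt (mul_pos hD₁pos hD₂pos)) h5
    have hm_int : m * m' = 1 := by exact_mod_cast hmm'
    have hc_int : c₂ * c₃ = 1 := by exact_mod_cast hcc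
    have hm_unit : m = 1 ∨ m = -1 := Int.isUnit_iff.mp (IsUnit.of_mul_eq_one _ hm_int)
    have hc_unit : c₂ = 1 ∨ c₂ = -1 := Int.isUnit_iff.mp (IsUnit.of_mul_eq_one _ hc_int)
    have hD : ((p ^ i : ℕ) : ℚ) = ((p ^ j : ℕ) : ℚ) := by
      rcases hm_unit with h1 | h1 <;> rcases hc_unit with h2 | h2 <;>
        rw [h1, h2] at e2 <;> push_cast at e2 hD₁pos hD₂pos ⊢ <;> linarith
    have hpow : (p ^ i : ℕ) = (p ^ j : ℕ) := Nat.cast_injective hD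
    exact Nat.pow_right_injective hp2 hpow
  · intro hij
    subst hij
    exact zg_iso_smul_smul ρ (craigL n (p ^ i)) hqa hqb
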